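/- Let G be a reductive matrix Lie group, x ∈ 𝔤 ≅ 𝔤* via the trace form, x_h its hyperbolic part, 𝔲 = ⊕_{a>0} 𝔤^a the sum of positive eigenspaces of ad(x_h), and 𝔮 = 𝔤^0 ⊕ 𝔲. Then the annihilator of 𝔮 with respect to the trace form is 𝔲, and ad(x) maps 𝔲 onto 𝔲; consequently 𝔲(x) = {[x,Z] : Z ∈ 𝔲} equals ann(𝔮), so 𝔮 is coisotropic at x. -/

import Mathlib

/- STATEMENT 17: G reductive matrix group, x ∈ 𝔤 ≅ 𝔤* via the trace form,
x_h its hyperbolic part, 𝔲 = ⊕_{a>0} 𝔤^a, 𝔮 = 𝔤^0 ⊕ 𝔲.  Then the trace-form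
annihilator of 𝔮 in 𝔤 is 𝔲, and ad(x) maps 𝔲 onto 𝔲; consequently
𝔲(x) = {[x,Z] : Z ∈ 𝔲} = ann(𝔮), so 𝔮 is coisotropic at x. -/

attribute [local instance 100] LieRing.ofAssociativeRing

open Matrix

private lemma aux_ker_iff {n : ℕ} (xh Z : Matrix (Fin n) (Fin n) ℝ) (a : ℝ) :
    Z ∈ LinearMap.ker (LieAlgebra.ad ℝ (Matrix (Fin n) (Fin n) ℝ) xh - a • LinearMap.id) ↔
      ⁅xh, Z⁆ = a • Z := by
  simp [LinearMap.mem_ker, LinearMap.sub_apply, LinearMap.smul_apply, sub_eq_zero]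

private lemma aux_pair {n : ℕ} (xh : Matrix (Fin n) (Fin n) ℝ)
    (Z W : Matrix (Fin n) (Fin n) ℝ) {a b : ℝ} (hab : a + b ≠ 0)
    (hZ : ⁅xh, Z⁆ = a • Z) (hW : ⁅xh, W⁆ = b • W) : (Z * W).trace = 0 := by
  rw [Ring.lie_def] at hZ hW
  have e : a • (Z * W) + b • (Z * W) = xh * (Z * W) - (Z * W) * xh := by
    calc a • (Z * W) + b • (Z * W) = (a • Z) * W + Z * (b • W) := by
          rw [smul_mul_assoc, mul_smul_comm]
      _ = (xh * Z - Z * xh) * W + Z * (xh * W - W * xh) := by rw [hZ, hW]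
      _ = xh * (Z * W) - (Z * W) * xh := by noncomm_ring
  have h := congrArg Matrix.trace e
  rw [trace_add, trace_smul, trace_smul, trace_sub, trace_mul_comm xh (Z * W), sub_self] at h
  have h2 : (a + b) * (Z * W).trace = 0 := by
    rw [add_mul]; simpa [smul_eq_mul] using h
  exact (mul_eq_zero.mp h2).resolve_left hab

private lemma aux_pair_sup {n : ℕ} (xh : Matrix (Fin n) (Fin n) ℝ) (S T : Set ℝ)
    (hST : ∀ a ∈ S, ∀ b ∈ T, a + b ≠ 0) {Z W : Matrix (Fin n) (Fin n) ℝ}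
    (hZ : Z ∈ ⨆ a ∈ S, LinearMap.ker
      (LieAlgebra.ad ℝ (Matrix (Fin n) (Fin n) ℝ) xh - a • LinearMap.id))
    (hW : W ∈ ⨆ b ∈ T, LinearMap.ker
      (LieAlgebra.ad ℝ (Matrix (Fin n) (Fin n) ℝ) xh - b • LinearMap.id)) :
    (Z * W).trace = 0 := by
  refine Submodule.iSup_induction (motive := fun Y => (Y * W).trace = 0) _ hZ ?_ (by simp) ?_
  · intro a z hz
    by_cases ha : a ∈ S
    · rw [iSup_pos ha] at hz
      refine Submodule.iSup_induction (motive := fun Y => (z * Y).trace = 0) _ hW ?_ (by simp) ?_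
      · intro b w hw
        by_cases hb : b ∈ T
        · rw [iSup_pos hb] at hw
          exact aux_pair xh z w (hST a ha b hb) ((aux_ker_iff xh z a).mp hz)
            ((aux_ker_iff xh w b).mp hw)
        · rw [iSup_neg hb] at hw
          simp [(Submodule.mem_bot ℝ).mp hw]
      · intro w1 w2 h1 h2
        rw [mul_add, trace_add, h1, h2, add_zero]
    · rw [iSup_neg ha] at hz
      simp [(Submodule.mem_bot ℝ).mp hz]
  · intro z1 z2 h1 h2
    rw [add_mul, trace_add, h1, h2, add_zero]

private lemma aux_tr_transpose {n : ℕ} (W : Matrix (Fin n) (Fin n) ℝ)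
    (h : (W * Wᵀ).trace = 0) : W = 0 := by
  have e : (W * Wᵀ).trace = ∑ i, ∑ j, (W i j) ^ 2 := by
    simp [Matrix.trace, Matrix.mul_apply, Matrix.diag, sq]
  rw [e] at h
  ext i j
  have h1 := (Finset.sum_eq_zero_iff_of_nonneg
    (fun i _ => Finset.sum_nonneg fun j _ => sq_nonneg (W i j))).mp h i (Finset.mem_univ i)
  have h2 := (Finset.sum_eq_zero_iff_of_nonneg
    (fun j _ => sq_nonneg (W i j))).mp h1 j (Finset.mem_univ j)
  simpa using sq_eq_zero_iff.mp h2

theorem stmt_17 {n : ℕ}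
    (𝔤 : LieSubalgebra ℝ (Matrix (Fin n) (Fin n) ℝ))
    (hΘ : ∀ Z ∈ 𝔤, Z.transpose ∈ 𝔤)
    (x xh : Matrix (Fin n) (Fin n) ℝ) (hx : x ∈ 𝔤) (hxh : xh ∈ 𝔤)
    (E : ℝ → Submodule ℝ (Matrix (Fin n) (Fin n) ℝ))
    (hE : ∀ a, E a = (𝔤 : Submodule ℝ (Matrix (Fin n) (Fin n) ℝ)) ⊓
      LinearMap.ker (LieAlgebra.ad ℝ (Matrix (Fin n) (Fin n) ℝ) xh
        - a • LinearMap.id))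
    -- x_h hyperbolic: 𝔤 decomposes into eigenspaces of ad(x_h)
    (hdiag : (⨆ a : ℝ, E a) = (𝔤 : Submodule ℝ (Matrix (Fin n) (Fin n) ℝ)))
    -- x commutes with its hyperbolic part, so x ∈ 𝔤^0
    (hx0 : x ∈ E 0)
    -- the commutant of x commutes with x_h: 𝔤_x ⊆ 𝔤_{x_h} = 𝔤^0
    (hcomm : ∀ Z ∈ 𝔤, ⁅x, Z⁆ = 0 → Z ∈ E 0)
    -- 𝔲 = sum of the positive eigenspaces, 𝔮 = 𝔤^0 ⊕ 𝔲
    (u q : Submodule ℝ (Matrix (Fin n) (Fin n) ℝ))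
    (hu : u = ⨆ a : ℝ, ⨆ _ : 0 < a, E a)
    (hq : q = E 0 ⊔ u) :
    -- (i) ann(𝔮) = 𝔲 :
    ({Z | Z ∈ 𝔤 ∧ ∀ W ∈ q, (Z * W).trace = 0} = (u : Set (Matrix (Fin n) (Fin n) ℝ))) ∧
    -- (ii) ad(x) maps 𝔲 onto 𝔲, i.e. 𝔲(x) = 𝔲 :
    ({Y | ∃ Z ∈ u, Y = ⁅x, Z⁆} = (u : Set (Matrix (Fin n) (Fin n) ℝ))) ∧
    -- consequently 𝔲(x) = ann(𝔮): 𝔮 is coisotropic at x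
    ({Y | ∃ Z ∈ u, Y = ⁅x, Z⁆}
      = {Z | Z ∈ 𝔤 ∧ ∀ W ∈ q, (Z * W).trace = 0}) := by
  have hEg : ∀ a, E a ≤ (𝔤 : Submodule ℝ (Matrix (Fin n) (Fin n) ℝ)) := fun a => by
    rw [hE a]; exact inf_le_left
  have hEK : ∀ a, E a ≤ LinearMap.ker
      (LieAlgebra.ad ℝ (Matrix (Fin n) (Fin n) ℝ) xh - a • LinearMap.id) := fun a => by
    rw [hE a]; exact inf_le_right
  have hmemE : ∀ (a : ℝ) (Z : Matrix (Fin n) (Fin n) ℝ),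
      Z ∈ E a ↔ Z ∈ 𝔤 ∧ ⁅xh, Z⁆ = a • Z := fun a Z => by
    rw [hE a, Submodule.mem_inf, aux_ker_iff]
    exact and_congr_left fun _ => Iff.rfl
  have hug : u ≤ (𝔤 : Submodule ℝ (Matrix (Fin n) (Fin n) ℝ)) := by
    rw [hu]; exact iSup₂_le fun a _ => hEg a
  have huq : u ≤ q := hq ▸ le_sup_right
  have hE0q : E 0 ≤ q := hq ▸ le_sup_left
  have huK : u ≤ ⨆ a ∈ {a : ℝ | 0 < a}, LinearMap.ker
      (LieAlgebra.ad ℝ (Matrix (Fin n) (Fin n) ℝ) xh - a • LinearMap.id) := by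
    rw [hu]; exact iSup₂_le fun a ha => le_iSup₂_of_le a ha (hEK a)
  have hqK : q ≤ ⨆ a ∈ {a : ℝ | 0 ≤ a}, LinearMap.ker
      (LieAlgebra.ad ℝ (Matrix (Fin n) (Fin n) ℝ) xh - a • LinearMap.id) := by
    rw [hq]
    have h0 : (0 : ℝ) ∈ {a : ℝ | 0 ≤ a} := by simp
    exact sup_le (le_iSup₂_of_le 0 h0 (hEK 0))
      (huK.trans (biSup_mono fun a ha => Set.mem_setOf.mpr (le_of_lt ha)))
  -- part 1, easy direction: u ⊆ ann(q)
  have hann_u : ∀ Z ∈ u, ∀ W ∈ q, (Z * W).trace = 0 := fun Z hZ W hW =>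
    aux_pair_sup xh {a : ℝ | 0 < a} {a : ℝ | 0 ≤ a}
      (fun a ha b hb => (add_pos_of_pos_of_nonneg ha hb).ne') (huK hZ) (hqK hW)
  -- splitting 𝔤 = u ⊔ (nonpositive part)
  have hsplit : ∀ Y, Y ∈ 𝔤 → ∃ U ∈ u, ∃ W ∈ (⨆ a ∈ {a : ℝ | a ≤ 0}, E a), Y = U + W := by
    intro Y hY
    have h1 : Y ∈ (⨆ a : ℝ, E a) := by
      rw [hdiag]; exact hY
    rw [iSup_split E (fun a => 0 < a), Submodule.mem_sup] at h1
    obtain ⟨U, hU, W, hW, hYe⟩ := h1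
    refine ⟨U, by rw [hu]; exact hU, W, ?_, hYe.symm⟩
    exact (iSup_mono fun a => iSup_le fun h =>
      le_iSup (fun _ : a ∈ {a : ℝ | a ≤ 0} => E a) (not_lt.mp h)) hW
  have hwsplit : ∀ Y, Y ∈ (⨆ a ∈ {a : ℝ | a ≤ 0}, E a) →
      ∃ A₀ ∈ E 0, ∃ Am ∈ (⨆ a ∈ {a : ℝ | a < 0}, E a), Y = A₀ + Am := by
    intro Y hY
    have hset : {a : ℝ | a ≤ 0} = insert (0 : ℝ) {a : ℝ | a < 0} := by
      ext a
      simp only [Set.mem_setOf_eq, Set.mem_insert_iff]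
      constructor
      · intro h
        rcases lt_or_eq_of_le h with h | h
        exacts [Or.inr h, Or.inl h]
      · rintro (h | h)
        exacts [le_of_eq h, le_of_lt h]
    rw [hset, iSup_insert, Submodule.mem_sup] at hY
    obtain ⟨A₀, h0, Am, hm, hYe⟩ := hY
    exact ⟨A₀, h0, Am, hm, hYe.symm⟩
  have hwg : (⨆ a ∈ {a : ℝ | a ≤ 0}, E a) ≤ (𝔤 : Submodule ℝ (Matrix (Fin n) (Fin n) ℝ)) :=
    iSup₂_le fun a _ => hEg a
  have hwK : (⨆ a ∈ {a : ℝ | a ≤ 0}, E a) ≤ ⨆ a ∈ {a : ℝ | a ≤ 0}, LinearMap.ker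
      (LieAlgebra.ad ℝ (Matrix (Fin n) (Fin n) ℝ) xh - a • LinearMap.id) :=
    iSup₂_le fun a ha => le_iSup₂_of_le a ha (hEK a)
  have hvK : (⨆ a ∈ {a : ℝ | a < 0}, E a) ≤ ⨆ a ∈ {a : ℝ | a < 0}, LinearMap.ker
      (LieAlgebra.ad ℝ (Matrix (Fin n) (Fin n) ℝ) xh - a • LinearMap.id) :=
    iSup₂_le fun a ha => le_iSup₂_of_le a ha (hEK a)
  -- part 1, hard direction
  have hann_sub : ∀ Z, Z ∈ 𝔤 → (∀ W ∈ q, (Z * W).trace = 0) → Z ∈ u := by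
    intro Z hZg hZa
    obtain ⟨U, hU, W, hW, hZe⟩ := hsplit Z hZg
    have hWann : ∀ Wq ∈ q, (W * Wq).trace = 0 := by
      intro Wq hWq
      have h1 := hZa Wq hWq
      have h2 := hann_u U hU Wq hWq
      have h3 : Z * Wq = U * Wq + W * Wq := by rw [hZe, add_mul]
      have h4 := congrArg Matrix.trace h3
      rw [trace_add, h1, h2, zero_add] at h4
      exact h4.symm
    have hWTg : Wᵀ ∈ 𝔤 := hΘ W (hwg hW)
    obtain ⟨B, hB, A, hA, hWTe⟩ := hsplit Wᵀ hWTg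
    obtain ⟨A₀, hA0, Am, hAm, hAe⟩ := hwsplit A hA
    have t1 : (W * B).trace = 0 := hWann B (huq hB)
    have t2 : (W * A₀).trace = 0 := hWann A₀ (hE0q hA0)
    have t3 : (W * Am).trace = 0 :=
      aux_pair_sup xh {a : ℝ | a ≤ 0} {a : ℝ | a < 0}
        (fun a ha b hb => by
          have : a + b < 0 := add_neg_of_nonpos_of_neg ha hb
          exact this.ne) (hwK hW) (hvK hAm)
    have t0 : (W * Wᵀ).trace = 0 := by
      rw [hWTe, hAe, mul_add, mul_add, trace_add, trace_add, t1, t2, t3]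
      ring
    have hW0 : W = 0 := aux_tr_transpose W t0
    rw [hZe, hW0, add_zero]
    exact hU
  have part1 : {Z | Z ∈ 𝔤 ∧ ∀ W ∈ q, (Z * W).trace = 0}
      = (u : Set (Matrix (Fin n) (Fin n) ℝ)) := by
    ext Z
    constructor
    · rintro ⟨h1, h2⟩
      exact hann_sub Z h1 h2
    · intro hZ
      exact ⟨hug hZ, hann_u Z hZ⟩
  -- part 2
  have hEu : ∀ a : ℝ, 0 < a → E a ≤ u := fun a ha => by
    rw [hu]; exact le_iSup₂_of_le a ha le_rfl
  have hadu : ∀ Z ∈ u, ⁅x, Z⁆ ∈ u := by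
    intro Z hZ
    rw [hu] at hZ
    refine Submodule.iSup_induction (motive := fun Y => ⁅x, Y⁆ ∈ u) _ hZ ?_ (by simp) ?_
    · intro a z hz'
      by_cases ha : 0 < a
      case neg =>
        rw [iSup_neg ha] at hz'
        simp [(Submodule.mem_bot ℝ).mp hz']
      rw [iSup_pos ha] at hz'
      rename' hz' => hz
      have hz' := (hmemE a z).mp hz
      have hxE := (hmemE 0 x).mp hx0
      have h1 : ⁅x, z⁆ ∈ 𝔤 := 𝔤.lie_mem hx hz'.1
      have h2 : ⁅xh, ⁅x, z⁆⁆ = a • ⁅x, z⁆ := by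
        rw [leibniz_lie, hxE.2, hz'.2]
        simp
      exact hEu a ha ((hmemE a _).mpr ⟨h1, h2⟩)
    · intro z1 z2 h1 h2
      rw [lie_add]
      exact u.add_mem h1 h2
  have hdisj : ∀ Z ∈ u, Z ∈ E 0 → Z = 0 := by
    intro Z hZu hZ0
    set f := (LieAlgebra.ad ℝ (Matrix (Fin n) (Fin n) ℝ) xh : Module.End ℝ
      (Matrix (Fin n) (Fin n) ℝ)) with hf
    have hKe : ∀ a : ℝ, LinearMap.ker
        (LieAlgebra.ad ℝ (Matrix (Fin n) (Fin n) ℝ) xh - a • LinearMap.id)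
        ≤ f.eigenspace a := fun a Y hY =>
      Module.End.mem_eigenspace_iff.mpr (by
        have := (aux_ker_iff xh Y a).mp hY
        simpa [hf] using this)
    have h1 : Z ∈ f.eigenspace 0 := hKe 0 (hEK 0 hZ0)
    have h2 : Z ∈ ⨆ a : ℝ, ⨆ _ : a ≠ 0, f.eigenspace a := by
      have hle : u ≤ ⨆ a : ℝ, ⨆ _ : a ≠ (0 : ℝ), f.eigenspace a := by
        rw [hu]
        exact iSup₂_le fun a ha => le_iSup₂_of_le a (ne_of_gt ha) ((hEK a).trans (hKe a))
      exact hle hZu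
    have hind := Module.End.eigenspaces_iSupIndep f
    exact (Submodule.disjoint_def.mp (iSupIndep_def.mp hind 0)) Z h1 h2
  have hmap : ∀ Z ∈ u, (LieAlgebra.ad ℝ (Matrix (Fin n) (Fin n) ℝ) x) Z ∈ u := fun Z hZ => by
    simpa using hadu Z hZ
  set φ : u →ₗ[ℝ] u := (LieAlgebra.ad ℝ (Matrix (Fin n) (Fin n) ℝ) x).restrict hmap with hφdef
  have hinj : Function.Injective φ := by
    refine (injective_iff_map_eq_zero φ).mpr ?_
    rintro ⟨Z, hZ⟩ hφ
    have hb : ⁅x, Z⁆ = 0 := by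
      have := congrArg Subtype.val hφ
      simpa [hφdef, LinearMap.restrict_apply] using this
    exact Subtype.ext (hdisj Z hZ (hcomm Z (hug hZ) hb))
  have hsurj : Function.Surjective φ := LinearMap.injective_iff_surjective.mp hinj
  have part2 : {Y | ∃ Z ∈ u, Y = ⁅x, Z⁆} = (u : Set (Matrix (Fin n) (Fin n) ℝ)) := by
    ext Y
    constructor
    · rintro ⟨Z, hZ, rfl⟩
      exact hadu Z hZ
    · intro hY
      obtain ⟨⟨Z, hZ⟩, hφ⟩ := hsurj ⟨Y, hY⟩
      refine ⟨Z, hZ, ?_⟩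
      have := congrArg Subtype.val hφ
      simpa [hφdef, LinearMap.restrict_apply] using this.symm
  exact ⟨part1, part2, part2.trans part1.symm⟩
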